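/- Let E be a finite-dimensional real normed vector space and let J : E → (E →L[ℝ] E) be a C¹ map such that J(p) ∘ J(p) = −id for every p ∈ E. Suppose that for all C¹ vector fields X, Y : E → E and all p ∈ E one has (fderiv ℝ J p (X p))(Y p) = (fderiv ℝ J p (Y p))(X p) (i.e. the tangent-bundle-valued 2-form dJ vanishes). Then the Nijenhuis tensor of J vanishes: for all C¹ vector fields X, Y and all p ∈ E, [J·X, Y](p) + [X, J·Y](p) + J(p)([J·X, J·Y](p)) − J(p)([X,Y](p)) = 0, where (J·Z)(p) := J(p)(Z(p)) and [X,Y](p) = fderiv ℝ Y p (X p) − fderiv ℝ X p (Y p). -/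

import Mathlib

variable {E : Type*} [NormedAddCommGroup E] [NormedSpace ℝ E]

/-- The action of a pointwise endomorphism field `J` on a vector field `Z`:
`(J·Z)(p) = J(p)(Z(p))`. -/
def jApply (J : E → (E →L[ℝ] E)) (Z : E → E) : E → E :=
  fun p => J p (Z p)

/-- The Lie bracket of vector fields on a vector space:
`[X,Y](p) = DY(p)(X(p)) − DX(p)(Y(p))`. -/
noncomputable def lieBkt (X Y : E → E) : E → E :=
  fun p => fderiv ℝ Y p (X p) - fderiv ℝ X p (Y p)

lemma fderiv_jApply (J : E → (E →L[ℝ] E)) (Z : E → E)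
    (hJ : ContDiff ℝ 1 J) (hZ : ContDiff ℝ 1 Z) (p v : E) :
    fderiv ℝ (jApply J Z) p v = J p (fderiv ℝ Z p v) + fderiv ℝ J p v (Z p) := by
  have h := ((hJ.differentiable one_ne_zero p).hasFDerivAt.clm_apply
    (hZ.differentiable one_ne_zero p).hasFDerivAt)
  have : fderiv ℝ (jApply J Z) p
      = (J p).comp (fderiv ℝ Z p) + (fderiv ℝ J p).flip (Z p) := h.fderiv
  rw [this]; rfl

lemma anticomm (J : E → (E →L[ℝ] E)) (hJ : ContDiff ℝ 1 J)
    (hJ2 : ∀ p, (J p).comp (J p) = -ContinuousLinearMap.id ℝ E) (p v w : E) :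
    fderiv ℝ J p v (J p w) + J p (fderiv ℝ J p v w) = 0 := by
  have hu : HasFDerivAt (fun q => J q w) ((fderiv ℝ J p).flip w) p := by
    have := ((hJ.differentiable one_ne_zero p).hasFDerivAt.clm_apply
      (hasFDerivAt_const w p))
    simpa using this
  have hg : HasFDerivAt (fun q => J q (J q w))
      ((J p).comp ((fderiv ℝ J p).flip w) + (fderiv ℝ J p).flip (J p w)) p :=
    (hJ.differentiable one_ne_zero p).hasFDerivAt.clm_apply hu
  have hconst : (fun q : E => J q (J q w)) = fun _ => -w := by
    funext q
    have := congrArg (fun L : E →L[ℝ] E => L w) (hJ2 q)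
    simpa using this
  rw [hconst] at hg
  have h0 : ((J p).comp ((fderiv ℝ J p).flip w) + (fderiv ℝ J p).flip (J p w))
      = 0 := hg.unique (hasFDerivAt_const (-w) p)
  have := congrArg (fun L : E →L[ℝ] E => L v) h0
  simpa [add_comm] using this

/-- Flat-space instance of the paper's Proposition 2.4: if `J` is a `C¹` almost
complex structure on a finite-dimensional real vector space (`J(p)² = −id`)
whose tangent-bundle-valued `2`-form `dJ` vanishes, i.e.
`(DJ(p)(X(p)))(Y(p)) = (DJ(p)(Y(p)))(X(p))` for all `C¹` vector fields `X, Y`,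
then the Nijenhuis tensor of `J` vanishes:
`[J·X, Y] + [X, J·Y] + J[J·X, J·Y] − J[X,Y] = 0`. -/
theorem nijenhuis_eq_zero_of_dJ_eq_zero [FiniteDimensional ℝ E]
    (J : E → (E →L[ℝ] E)) (hJ : ContDiff ℝ 1 J)
    (hJ2 : ∀ p, (J p).comp (J p) = -ContinuousLinearMap.id ℝ E)
    (hdJ : ∀ X Y : E → E, ContDiff ℝ 1 X → ContDiff ℝ 1 Y → ∀ p : E,
      (fderiv ℝ J p (X p)) (Y p) = (fderiv ℝ J p (Y p)) (X p)) :
    ∀ X Y : E → E, ContDiff ℝ 1 X → ContDiff ℝ 1 Y → ∀ p : E,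
      lieBkt (jApply J X) Y p + lieBkt X (jApply J Y) p +
          J p (lieBkt (jApply J X) (jApply J Y) p) - J p (lieBkt X Y p) = 0 := by
  intro X Y hX hY p
  have hJX : ContDiff ℝ 1 (jApply J X) := hJ.clm_apply hX
  have hJY : ContDiff ℝ 1 (jApply J Y) := hJ.clm_apply hY
  have JJ : ∀ z, J p (J p z) = -z := by
    intro z
    have := congrArg (fun L : E →L[ℝ] E => L z) (hJ2 p)
    simpa using this
  have h1 : fderiv ℝ J p (Y p) (X p) = fderiv ℝ J p (X p) (Y p) := hdJ Y X hY hX p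
  have hA : fderiv ℝ J p (J p (X p)) (Y p) = - J p (fderiv ℝ J p (Y p) (X p)) := by
    have h2 := hdJ (jApply J X) Y hJX hY p
    simp only [jApply] at h2
    rw [h2]
    exact eq_neg_of_add_eq_zero_left (anticomm J hJ hJ2 p (Y p) (X p))
  have hB : fderiv ℝ J p (J p (Y p)) (X p) = - J p (fderiv ℝ J p (X p) (Y p)) := by
    have h3 := hdJ X (jApply J Y) hX hJY p
    simp only [jApply] at h3
    rw [← h3]
    exact eq_neg_of_add_eq_zero_left (anticomm J hJ hJ2 p (X p) (Y p))
  simp only [lieBkt, fderiv_jApply J X hJ hX, fderiv_jApply J Y hJ hY, jApply,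
    map_add, map_sub, map_neg, hA, hB, h1, JJ]
  abel
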